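/- arXiv:2205.13656 — 2 statements merged into one kernel-verified Lean document; each statement's English description precedes it below -/
import Mathlib

section
/- Let u₀, f and ũ₀, f̃ be two pairs of data as in the context, with Hölder constants L_{u₀}, L_f and L_{ũ₀}, L_{f̃} respectively, and let U^j and Ũ^j be the corresponding extended scheme solutions. Assume the CFL condition τ (p−1) M (max(L_{u₀}, L_{ũ₀}) + T·max(L_f, L_{f̃}))^{p−2} ≤ r^{2+(1−a)(p−2)}. Then for every j = 0, …, N, sup_{x∈ℝ^d} |U^j(x) − Ũ^j(x)| ≤ ‖u₀ − ũ₀‖_{L^∞(ℝ^d)} + t_j ‖f − f̃‖_{L^∞(ℝ^d)}. -/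
open scoped BigOperators

/-- `J_p(ξ) = |ξ|^{p-2} ξ`. -/
noncomputable def Jp (p ξ : ℝ) : ℝ := |ξ| ^ (p - 2) * ξ

/-- The grid point `y_β = h β ∈ ℝ^d` for `β ∈ ℤ^d`. -/
noncomputable def ygrid (d : ℕ) (h : ℝ) (β : Fin d → ℤ) : EuclideanSpace ℝ (Fin d) :=
  (WithLp.equiv 2 (Fin d → ℝ)).symm (fun i => h * (β i : ℝ))

/-- The discrete `p`-Laplacian `D_p^h ψ(x) = Σ_β J_p(ψ(x+y_β) - ψ(x)) ω_β`. -/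
noncomputable def Dph (d : ℕ) (p h : ℝ) (ω : (Fin d → ℤ) → ℝ)
    (ψ : EuclideanSpace ℝ (Fin d) → ℝ) (x : EuclideanSpace ℝ (Fin d)) : ℝ :=
  ∑ᶠ β, Jp p (ψ (x + ygrid d h β) - ψ x) * ω β



lemma Jp_zero (p : ℝ) : Jp p 0 = 0 := by simp [Jp]

lemma Jp_hasDerivAt (p : ℝ) (hp : 2 ≤ p) (x : ℝ) :
    HasDerivAt (Jp p) ((p - 1) * |x| ^ (p - 2)) x := by
  rcases lt_trichotomy x 0 with hx | hx | hx
  · -- x < 0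
    have habs : |x| = -x := abs_of_neg hx
    rw [habs]
    have h2 : HasDerivAt (fun ξ : ℝ => (-ξ) ^ (p - 1)) ((p - 1) * (-x) ^ (p - 2) * (-1)) x := by
      have := (Real.hasDerivAt_rpow_const (p := p - 1) (x := -x)
        (Or.inl (by linarith))).comp x (hasDerivAt_neg x)
      refine this.congr_deriv ?_
      ring_nf
    have h1 : HasDerivAt (fun ξ : ℝ => -((-ξ) ^ (p - 1))) ((p - 1) * (-x) ^ (p - 2)) x := by
      have := h2.neg
      refine this.congr_deriv ?_; ring
    refine h1.congr_of_eventuallyEq ?_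
    filter_upwards [Iio_mem_nhds hx] with ξ hξ
    have hξ0 : ξ < 0 := hξ
    rw [Jp, abs_of_neg hξ0, show p - 1 = (p - 2) + 1 by ring,
      Real.rpow_add_one (by linarith : (-ξ) ≠ 0)]
    ring
  · -- x = 0
    subst hx
    rcases eq_or_lt_of_le hp with hp2 | hp2
    · have heq : ∀ ξ : ℝ, Jp p ξ = ξ := by
        intro ξ; rw [Jp, ← hp2]; simp
      have h1 : HasDerivAt (fun ξ : ℝ => ξ) 1 (0:ℝ) := hasDerivAt_id 0
      have h3 : HasDerivAt (Jp p) 1 0 :=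
        h1.congr_of_eventuallyEq (by filter_upwards with ξ using (heq ξ))
      convert h3 using 1
      rw [← hp2]; norm_num
    · have hz : |(0:ℝ)| ^ (p - 2) = 0 := by
        rw [abs_zero, Real.zero_rpow (by linarith)]
      rw [hz, mul_zero]
      rw [hasDerivAt_iff_tendsto_slope]
      have hslope : ∀ ξ : ℝ, ξ ≠ 0 → slope (Jp p) 0 ξ = |ξ| ^ (p - 2) := by
        intro ξ hξ
        rw [slope_def_field, Jp, Jp_zero]
        field_simp
        ring
      have htend : Filter.Tendsto (fun ξ : ℝ => |ξ| ^ (p - 2)) (nhdsWithin 0 {(0:ℝ)}ᶜ) (nhds 0) := by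
        have hc : ContinuousAt (fun ξ : ℝ => |ξ| ^ (p - 2)) 0 :=
          (Real.continuousAt_rpow_const _ _ (Or.inr (by linarith))).comp continuous_abs.continuousAt
        have := hc.tendsto
        rw [show |(0:ℝ)| ^ (p-2) = 0 from hz] at this
        exact this.mono_left nhdsWithin_le_nhds
      refine htend.congr' ?_
      filter_upwards [self_mem_nhdsWithin] with ξ hξ
      exact (hslope ξ hξ).symm
  · -- x > 0
    rw [abs_of_pos hx]
    have h1 : HasDerivAt (fun ξ : ℝ => ξ ^ (p - 1)) ((p - 1) * x ^ (p - 1 - 1)) x :=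
      Real.hasDerivAt_rpow_const (Or.inl (ne_of_gt hx))
    rw [show p - 1 - 1 = p - 2 by ring] at h1
    refine h1.congr_of_eventuallyEq ?_
    filter_upwards [Ioi_mem_nhds hx] with ξ hξ
    have hξ0 : (0:ℝ) < ξ := hξ
    rw [Jp, abs_of_pos hξ0, show p - 1 = (p - 2) + 1 by ring,
      Real.rpow_add_one (ne_of_gt hξ0)]

lemma Jp_mono (p : ℝ) (hp : 2 ≤ p) : Monotone (Jp p) := by
  apply monotone_of_deriv_nonneg
  · exact fun x => (Jp_hasDerivAt p hp x).differentiableAt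
  · intro x
    rw [(Jp_hasDerivAt p hp x).deriv]
    exact mul_nonneg (by linarith) (Real.rpow_nonneg (abs_nonneg x) _)

lemma Jp_lip (p : ℝ) (hp : 2 ≤ p) {A B C : ℝ} (hA : |A| ≤ C) (hB : |B| ≤ C) :
    |Jp p A - Jp p B| ≤ (p - 1) * C ^ (p - 2) * |A - B| := by
  have hC : 0 ≤ C := le_trans (abs_nonneg A) hA
  have key : ∀ ξ ∈ Set.uIcc A B, HasDerivWithinAt (Jp p)
      ((fun ξ => (p - 1) * |ξ| ^ (p - 2)) ξ) (Set.uIcc A B) ξ :=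
    fun ξ _ => (Jp_hasDerivAt p hp ξ).hasDerivWithinAt
  have bound : ∀ ξ ∈ Set.uIcc A B, ‖(p - 1) * |ξ| ^ (p - 2)‖ ≤ (p - 1) * C ^ (p - 2) := by
    intro ξ hξ
    have h1 : |ξ| ≤ C := by
      rcases Set.mem_uIcc.mp hξ with ⟨h1, h2⟩ | ⟨h1, h2⟩
      · exact le_trans (abs_le_max_abs_abs h1 h2) (max_le hA hB)
      · exact le_trans (abs_le_max_abs_abs h1 h2) (max_le hB hA)
    rw [Real.norm_eq_abs, abs_of_nonneg (mul_nonneg (by linarith)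
      (Real.rpow_nonneg (abs_nonneg ξ) _))]
    exact mul_le_mul_of_nonneg_left
      (Real.rpow_le_rpow (abs_nonneg ξ) h1 (by linarith)) (by linarith)
  have := Convex.norm_image_sub_le_of_norm_hasDerivWithin_le key bound
    (convex_uIcc A B) Set.right_mem_uIcc Set.left_mem_uIcc
  simpa [Real.norm_eq_abs] using this

/-- There is a nonnegative bounded slope `c` with `Jp A - Jp B = c (A - B)`. -/
lemma Jp_slope (p : ℝ) (hp : 2 ≤ p) {A B C : ℝ} (hC : 0 ≤ C) (h : A ≠ B → |A| ≤ C ∧ |B| ≤ C) :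
    ∃ c : ℝ, 0 ≤ c ∧ c ≤ (p - 1) * C ^ (p - 2) ∧ Jp p A - Jp p B = c * (A - B) := by
  have hD : 0 ≤ (p - 1) * C ^ (p - 2) :=
    mul_nonneg (by linarith) (Real.rpow_nonneg hC _)
  rcases eq_or_ne A B with hAB | hAB
  · exact ⟨0, le_refl 0, hD, by rw [hAB]; ring⟩
  · obtain ⟨hA, hB⟩ := h hAB
    have hne : A - B ≠ 0 := sub_ne_zero.mpr hAB
    have habs : 0 < |A - B| := abs_pos.mpr hne
    refine ⟨(Jp p A - Jp p B) / (A - B), ?_, ?_, (div_mul_cancel₀ _ hne).symm⟩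
    · rcases lt_or_gt_of_ne hAB with hlt | hlt
      · have h1 : Jp p A ≤ Jp p B := Jp_mono p hp hlt.le
        exact div_nonneg_iff.mpr (Or.inr ⟨by linarith, by linarith⟩)
      · have h1 : Jp p B ≤ Jp p A := Jp_mono p hp hlt.le
        exact div_nonneg (by linarith) (by linarith)
    · calc (Jp p A - Jp p B) / (A - B) ≤ |(Jp p A - Jp p B) / (A - B)| := le_abs_self _
        _ = |Jp p A - Jp p B| / |A - B| := abs_div _ _
        _ ≤ (p - 1) * C ^ (p - 2) := (div_le_iff₀ habs).mpr (Jp_lip p hp hA hB)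


lemma ygrid_apply (d : ℕ) (h : ℝ) (β : Fin d → ℤ) (i : Fin d) :
    ygrid d h β i = h * (β i : ℝ) := rfl

lemma coord_le_norm (d : ℕ) (h : ℝ) (β : Fin d → ℤ) (i : Fin d) :
    |h * (β i : ℝ)| ≤ ‖ygrid d h β‖ := by
  rw [EuclideanSpace.norm_eq]
  have h1 : |h * (β i : ℝ)| = Real.sqrt (‖ygrid d h β i‖ ^ 2) := by
    rw [ygrid_apply, Real.norm_eq_abs, Real.sqrt_sq_eq_abs, abs_abs]
  rw [h1]
  apply Real.sqrt_le_sqrt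
  exact Finset.single_le_sum (f := fun j => ‖ygrid d h β j‖ ^ 2) (fun j _ => sq_nonneg _) (Finset.mem_univ i)

lemma support_omega_finite (d : ℕ) (h r : ℝ) (hh : 0 < h) (ω : (Fin d → ℤ) → ℝ)
    (hzero : ∀ β, r ≤ ‖ygrid d h β‖ → ω β = 0) :
    (Function.support ω).Finite := by
  have hsub : Function.support ω ⊆ Set.univ.pi (fun _ : Fin d => {n : ℤ | |n| ≤ ⌊r / h⌋}) := by
    intro β hβ
    intro i _
    have hnorm : ‖ygrid d h β‖ < r := by
      by_contra hc
      exact hβ (hzero β (not_lt.mp hc))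
    have h1 : |h * (β i : ℝ)| ≤ r := (coord_le_norm d h β i).trans hnorm.le
    have h2 : (|β i| : ℝ) ≤ r / h := by
      rw [le_div_iff₀ hh]
      calc (|β i| : ℝ) * h = |h * (β i : ℝ)| := by
            rw [abs_mul, abs_of_pos hh]; ring
        _ ≤ r := h1
    exact Int.le_floor.mpr (by exact_mod_cast h2)
  refine Set.Finite.subset (Set.Finite.pi fun i => ?_) hsub
  refine (Set.finite_Icc (-⌊r / h⌋) ⌊r / h⌋).subset (fun n hn => ?_)
  exact Set.mem_Icc.mpr (abs_le.mp hn)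



lemma Dph_eq_sum {d : ℕ} {p h : ℝ} {ω : (Fin d → ℤ) → ℝ}
    (hfin : (Function.support ω).Finite)
    (ψ : EuclideanSpace ℝ (Fin d) → ℝ) (x : EuclideanSpace ℝ (Fin d)) :
    Dph d p h ω ψ x = ∑ β ∈ hfin.toFinset, Jp p (ψ (x + ygrid d h β) - ψ x) * ω β := by
  apply finsum_eq_finset_sum_of_support_subset
  intro β hβ
  simp only [Function.mem_support] at hβ
  have : ω β ≠ 0 := fun hc => hβ (by rw [hc, mul_zero])
  simpa using this

lemma Dph_translate (d : ℕ) (p h : ℝ) (ω : (Fin d → ℤ) → ℝ)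
    (ψ : EuclideanSpace ℝ (Fin d) → ℝ) (x z : EuclideanSpace ℝ (Fin d)) :
    Dph d p h ω (fun w => ψ (w + z)) x = Dph d p h ω ψ (x + z) := by
  unfold Dph
  apply finsum_congr
  intro β
  rw [add_right_comm]

lemma step_bound (d : ℕ) (p h : ℝ) (hp : 2 ≤ p) (ω : (Fin d → ℤ) → ℝ)
    (hnn : ∀ β, 0 ≤ ω β) (hfin : (Function.support ω).Finite)
    (τ K B : ℝ) (hτ : 0 ≤ τ) (hK : 0 ≤ K)
    (ψ ψ' g g' : EuclideanSpace ℝ (Fin d) → ℝ)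
    (hincr : ∀ x β, ω β ≠ 0 → |ψ (x + ygrid d h β) - ψ x| ≤ K)
    (hincr' : ∀ x β, ω β ≠ 0 → |ψ' (x + ygrid d h β) - ψ' x| ≤ K)
    (hCFL : τ * ((p - 1) * K ^ (p - 2)) * (∑ β ∈ hfin.toFinset, ω β) ≤ 1)
    (hB : ∀ x, |ψ x - ψ' x| ≤ B)
    (x : EuclideanSpace ℝ (Fin d)) :
    |ψ x + τ * (Dph d p h ω ψ x + g x) - (ψ' x + τ * (Dph d p h ω ψ' x + g' x))| ≤
      B + τ * |g x - g' x| := by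
  classical
  set s := hfin.toFinset with hs
  set D := (p - 1) * K ^ (p - 2) with hD
  have hDnn : 0 ≤ D := mul_nonneg (by linarith) (Real.rpow_nonneg hK _)
  have hc : ∀ β : Fin d → ℤ, ∃ c : ℝ, 0 ≤ c ∧ c ≤ D ∧ (ω β ≠ 0 →
      Jp p (ψ (x + ygrid d h β) - ψ x) - Jp p (ψ' (x + ygrid d h β) - ψ' x) =
        c * ((ψ (x + ygrid d h β) - ψ x) - (ψ' (x + ygrid d h β) - ψ' x))) := by
    intro β
    by_cases hω : ω β = 0
    · exact ⟨0, le_rfl, hDnn, fun hc => absurd hω hc⟩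
    · obtain ⟨c, h0, h1, h2⟩ := Jp_slope p hp hK
        (fun _ => ⟨hincr x β hω, hincr' x β hω⟩)
      exact ⟨c, h0, h1, fun _ => h2⟩
  choose c hc0 hcD hceq using hc
  set S := ∑ β ∈ s, c β * ω β with hSdef
  have hS0 : 0 ≤ S := Finset.sum_nonneg fun β _ => mul_nonneg (hc0 β) (hnn β)
  have hSle : S ≤ D * ∑ β ∈ s, ω β := by
    rw [Finset.mul_sum]
    exact Finset.sum_le_sum fun β _ => mul_le_mul_of_nonneg_right (hcD β) (hnn β)
  have hτS : τ * S ≤ 1 := by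
    calc τ * S ≤ τ * (D * ∑ β ∈ s, ω β) := mul_le_mul_of_nonneg_left hSle hτ
      _ = τ * D * ∑ β ∈ s, ω β := by ring
      _ ≤ 1 := by rw [hD]; exact le_of_eq_of_le (by ring) hCFL
  have hDsub : Dph d p h ω ψ x - Dph d p h ω ψ' x =
      (∑ β ∈ s, c β * ω β * (ψ (x + ygrid d h β) - ψ' (x + ygrid d h β))) -
        S * (ψ x - ψ' x) := by
    rw [Dph_eq_sum hfin ψ x, Dph_eq_sum hfin ψ' x, ← Finset.sum_sub_distrib,
      hSdef, Finset.sum_mul, ← Finset.sum_sub_distrib]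
    apply Finset.sum_congr rfl
    intro β _
    by_cases hω : ω β = 0
    · simp [hω]
    · have heq := hceq β hω
      rw [← sub_mul, heq]; ring
  set Sig1 := ∑ β ∈ s, c β * ω β * (ψ (x + ygrid d h β) - ψ' (x + ygrid d h β)) with hSig1
  have hE : ψ x + τ * (Dph d p h ω ψ x + g x) - (ψ' x + τ * (Dph d p h ω ψ' x + g' x)) =
      (ψ x - ψ' x) * (1 - τ * S) + τ * Sig1 + τ * (g x - g' x) := by
    linear_combination τ * hDsub
  have hBnn : 0 ≤ B := (abs_nonneg _).trans (hB x)
  have h1 : |(ψ x - ψ' x) * (1 - τ * S)| ≤ B * (1 - τ * S) := by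
    rw [abs_mul, abs_of_nonneg (by linarith : (0:ℝ) ≤ 1 - τ * S)]
    exact mul_le_mul_of_nonneg_right (hB x) (by linarith)
  have h2 : |Sig1| ≤ S * B := by
    calc |Sig1| ≤ ∑ β ∈ s, |c β * ω β * (ψ (x + ygrid d h β) - ψ' (x + ygrid d h β))| :=
          Finset.abs_sum_le_sum_abs _ _
      _ ≤ ∑ β ∈ s, c β * ω β * B := by
          apply Finset.sum_le_sum
          intro β _
          rw [abs_mul, abs_of_nonneg (mul_nonneg (hc0 β) (hnn β))]
          exact mul_le_mul_of_nonneg_left (hB _) (mul_nonneg (hc0 β) (hnn β))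
      _ = S * B := by rw [hSdef, Finset.sum_mul]
  have h3 : |τ * Sig1| ≤ τ * (S * B) := by
    rw [abs_mul, abs_of_nonneg hτ]
    exact mul_le_mul_of_nonneg_left h2 hτ
  rw [hE]
  calc |(ψ x - ψ' x) * (1 - τ * S) + τ * Sig1 + τ * (g x - g' x)| ≤
        |(ψ x - ψ' x) * (1 - τ * S)| + |τ * Sig1| + |τ * (g x - g' x)| := abs_add_three _ _ _
    _ ≤ B * (1 - τ * S) + τ * (S * B) + τ * |g x - g' x| := by
        refine add_le_add (add_le_add h1 h3) ?_
        rw [abs_mul, abs_of_nonneg hτ]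
    _ = B + τ * |g x - g' x| := by ring

lemma holder_prop (d : ℕ) (p h r τ : ℝ) (hp : 2 ≤ p) (hr : 0 < r) (hτ : 0 < τ)
    (ω : (Fin d → ℤ) → ℝ) (hnn : ∀ β, 0 ≤ ω β)
    (hzero : ∀ β, r ≤ ‖ygrid d h β‖ → ω β = 0)
    (hfin : (Function.support ω).Finite)
    (a : ℝ) (ha0 : 0 < a)
    (Lu Lf : ℝ) (hLu : 0 ≤ Lu) (hLf : 0 ≤ Lf)
    (u₀ f : EuclideanSpace ℝ (Fin d) → ℝ)
    (hu₀ : ∀ x y, |u₀ x - u₀ y| ≤ Lu * ‖x - y‖ ^ a)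
    (hf : ∀ x y, |f x - f y| ≤ Lf * ‖x - y‖ ^ a)
    (U : ℕ → EuclideanSpace ℝ (Fin d) → ℝ)
    (hU0 : ∀ x, U 0 x = u₀ x)
    (hUrec : ∀ j x, U (j + 1) x = U j x + τ * (Dph d p h ω (U j) x + f x))
    (N : ℕ) (L : ℝ) (hL : ∀ j : ℕ, j ≤ N → Lu + (j : ℝ) * τ * Lf ≤ L)
    (hCFL' : τ * ((p - 1) * (L * r ^ a) ^ (p - 2)) * (∑ β ∈ hfin.toFinset, ω β) ≤ 1) :
    ∀ j : ℕ, j ≤ N → ∀ x z, |U j (x + z) - U j x| ≤ (Lu + (j : ℝ) * τ * Lf) * ‖z‖ ^ a := by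
  have hLnn : 0 ≤ L := le_trans (by simpa using hLu) (hL 0 (Nat.zero_le N))
  have hKnn : 0 ≤ L * r ^ a := mul_nonneg hLnn (Real.rpow_nonneg hr.le a)
  intro j
  induction j with
  | zero =>
    intro _ x z
    simp only [hU0, Nat.cast_zero, zero_mul, add_zero]
    have := hu₀ (x + z) x
    rwa [add_sub_cancel_left] at this
  | succ j ih =>
    intro hj x z
    have hjN : j ≤ N := Nat.le_of_succ_le hj
    have IH := ih hjN
    have hLj : Lu + (j : ℝ) * τ * Lf ≤ L := hL j hjN
    have hLjnn : 0 ≤ Lu + (j : ℝ) * τ * Lf := by positivity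
    -- increments bounded by K
    have hincrU : ∀ (x₀ : EuclideanSpace ℝ (Fin d)) β, ω β ≠ 0 →
        |U j (x₀ + ygrid d h β) - U j x₀| ≤ L * r ^ a := by
      intro x₀ β hω
      have hnorm : ‖ygrid d h β‖ < r := by
        by_contra hc
        exact hω (hzero β (not_lt.mp hc))
      calc |U j (x₀ + ygrid d h β) - U j x₀| ≤
            (Lu + (j : ℝ) * τ * Lf) * ‖ygrid d h β‖ ^ a := IH x₀ _
        _ ≤ L * r ^ a := by
            apply mul_le_mul hLj
              (Real.rpow_le_rpow (norm_nonneg _) hnorm.le ha0.le)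
              (Real.rpow_nonneg (norm_nonneg _) a) hLnn
    have hstep := step_bound d p h hp ω hnn hfin τ (L * r ^ a)
      ((Lu + (j : ℝ) * τ * Lf) * ‖z‖ ^ a) hτ.le hKnn
      (fun w => U j (w + z)) (U j) (fun w => f (w + z)) f
      (fun x₀ β hω => by
        have h1 : x₀ + ygrid d h β + z = (x₀ + z) + ygrid d h β := by
          rw [add_right_comm]
        simpa [h1] using hincrU (x₀ + z) β hω)
      hincrU hCFL'
      (fun w => IH w z) x
    have htrans : (fun w => U j (w + z)) x + τ * (Dph d p h ω (fun w => U j (w + z)) x +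
        (fun w => f (w + z)) x) = U (j + 1) (x + z) := by
      simp only [Dph_translate]
      rw [hUrec j (x + z)]
    rw [htrans, ← hUrec j x] at hstep
    have hfz : |f (x + z) - f x| ≤ Lf * ‖z‖ ^ a := by
      have := hf (x + z) x
      rwa [add_sub_cancel_left] at this
    calc |U (j + 1) (x + z) - U (j + 1) x| ≤
          (Lu + (j : ℝ) * τ * Lf) * ‖z‖ ^ a + τ * |f (x + z) - f x| := hstep
      _ ≤ (Lu + (j : ℝ) * τ * Lf) * ‖z‖ ^ a + τ * (Lf * ‖z‖ ^ a) :=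
          add_le_add_right (mul_le_mul_of_nonneg_left hfz hτ.le) _
      _ = (Lu + ((j : ℕ) + 1 : ℝ) * τ * Lf) * ‖z‖ ^ a := by push_cast; ring
      _ = (Lu + ((j + 1 : ℕ) : ℝ) * τ * Lf) * ‖z‖ ^ a := by norm_num


/-- Continuous dependence on the data (Proposition 3.5). -/
theorem scheme_continuous_dependence (d : ℕ) (hd : 1 ≤ d) (p : ℝ) (hp : 2 ≤ p)
    (h r τ : ℝ) (hh : 0 < h) (hr : 0 < r) (hτ : 0 < τ) (N : ℕ) (M : ℝ) (hM : 0 < M)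
    (ω : (Fin d → ℤ) → ℝ) (hsym : ∀ β, ω (-β) = ω β) (hnn : ∀ β, 0 ≤ ω β)
    (hzero : ∀ β, r ≤ ‖ygrid d h β‖ → ω β = 0)
    (hsum : ∑ᶠ β, ω β ≤ M * r ^ (-p))
    (a Lu Lf Lu' Lf' : ℝ) (ha0 : 0 < a) (ha1 : a ≤ 1)
    (u₀ f u₀' f' : EuclideanSpace ℝ (Fin d) → ℝ)
    (hu₀b : BddAbove (Set.range fun x => |u₀ x|))
    (hfb : BddAbove (Set.range fun x => |f x|))
    (hu₀b' : BddAbove (Set.range fun x => |u₀' x|))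
    (hfb' : BddAbove (Set.range fun x => |f' x|))
    (hu₀ : ∀ x y, |u₀ x - u₀ y| ≤ Lu * ‖x - y‖ ^ a)
    (hf : ∀ x y, |f x - f y| ≤ Lf * ‖x - y‖ ^ a)
    (hu₀' : ∀ x y, |u₀' x - u₀' y| ≤ Lu' * ‖x - y‖ ^ a)
    (hf' : ∀ x y, |f' x - f' y| ≤ Lf' * ‖x - y‖ ^ a)
    (U U' : ℕ → EuclideanSpace ℝ (Fin d) → ℝ)
    (hU0 : ∀ x, U 0 x = u₀ x)
    (hUrec : ∀ j x, U (j + 1) x = U j x + τ * (Dph d p h ω (U j) x + f x))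
    (hU0' : ∀ x, U' 0 x = u₀' x)
    (hUrec' : ∀ j x, U' (j + 1) x = U' j x + τ * (Dph d p h ω (U' j) x + f' x))
    (hCFL : τ * (p - 1) * M * (max Lu Lu' + (N : ℝ) * τ * max Lf Lf') ^ (p - 2) ≤
      r ^ (2 + (1 - a) * (p - 2))) :
    ∀ j ≤ N, ∀ x,
      |U j x - U' j x| ≤ (⨆ x, |u₀ x - u₀' x|) + (j : ℝ) * τ * ⨆ x, |f x - f' x| := by
  classical
  -- nonnegativity of the Hölder constants
  have hpoint : ∃ e : EuclideanSpace ℝ (Fin d), ‖e - 0‖ ^ a = 1 := by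
    refine ⟨EuclideanSpace.single ⟨0, hd⟩ (1 : ℝ), ?_⟩
    rw [sub_zero, EuclideanSpace.norm_single, norm_one, Real.one_rpow]
  obtain ⟨e, he⟩ := hpoint
  have hconst : ∀ (v : EuclideanSpace ℝ (Fin d) → ℝ) (Lv : ℝ),
      (∀ x y, |v x - v y| ≤ Lv * ‖x - y‖ ^ a) → 0 ≤ Lv := by
    intro v Lv hv
    have := (abs_nonneg (v e - v 0)).trans (hv e 0)
    rw [he, mul_one] at this
    exact this
  have hLu : 0 ≤ Lu := hconst u₀ Lu hu₀
  have hLf : 0 ≤ Lf := hconst f Lf hf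
  have hLu' : 0 ≤ Lu' := hconst u₀' Lu' hu₀'
  have hLf' : 0 ≤ Lf' := hconst f' Lf' hf'
  have hfin : (Function.support ω).Finite := support_omega_finite d h r hh ω hzero
  set L : ℝ := max Lu Lu' + (N : ℝ) * τ * max Lf Lf' with hLdef
  have hLnn : 0 ≤ L := by positivity
  set Sω : ℝ := ∑ β ∈ hfin.toFinset, ω β with hSω
  have hSωle : Sω ≤ M * r ^ (-p) := by
    rw [hSω, ← finsum_eq_sum ω hfin]; exact hsum
  have hSω0 : 0 ≤ Sω := Finset.sum_nonneg fun β _ => hnn β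
  -- the CFL condition in the form needed for the one-step lemma
  have hCFL' : τ * ((p - 1) * (L * r ^ a) ^ (p - 2)) * Sω ≤ 1 := by
    have hrw : (L * r ^ a) ^ (p - 2) = L ^ (p - 2) * r ^ (a * (p - 2)) := by
      rw [Real.mul_rpow hLnn (Real.rpow_nonneg hr.le a), Real.rpow_mul hr.le]
    rw [hrw]
    have h1 : τ * ((p - 1) * (L ^ (p - 2) * r ^ (a * (p - 2)))) * Sω ≤
        τ * ((p - 1) * (L ^ (p - 2) * r ^ (a * (p - 2)))) * (M * r ^ (-p)) := by
      apply mul_le_mul_of_nonneg_left hSωle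
      exact mul_nonneg hτ.le (mul_nonneg (by linarith) (by positivity))
    refine h1.trans ?_
    have h2 : τ * ((p - 1) * (L ^ (p - 2) * r ^ (a * (p - 2)))) * (M * r ^ (-p)) =
        (τ * (p - 1) * M * L ^ (p - 2)) * (r ^ (a * (p - 2)) * r ^ (-p)) := by ring
    rw [h2]
    have h3 : (τ * (p - 1) * M * L ^ (p - 2)) * (r ^ (a * (p - 2)) * r ^ (-p)) ≤
        r ^ (2 + (1 - a) * (p - 2)) * (r ^ (a * (p - 2)) * r ^ (-p)) := by
      apply mul_le_mul_of_nonneg_right hCFL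
      positivity
    refine h3.trans ?_
    rw [← Real.rpow_add hr, ← Real.rpow_add hr,
      show 2 + (1 - a) * (p - 2) + (a * (p - 2) + -p) = 0 by ring, Real.rpow_zero]
  -- Hölder regularity of the two schemes
  have hLL : ∀ j : ℕ, j ≤ N → Lu + (j : ℝ) * τ * Lf ≤ L := by
    intro j hj
    rw [hLdef]
    have : (j : ℝ) * τ * Lf ≤ (N : ℝ) * τ * max Lf Lf' := by
      apply mul_le_mul
      · apply mul_le_mul_of_nonneg_right _ hτ.le
        exact_mod_cast hj
      · exact le_max_left _ _
      · exact hLf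
      · positivity
    have h2 : Lu ≤ max Lu Lu' := le_max_left _ _
    linarith
  have hLL' : ∀ j : ℕ, j ≤ N → Lu' + (j : ℝ) * τ * Lf' ≤ L := by
    intro j hj
    rw [hLdef]
    have : (j : ℝ) * τ * Lf' ≤ (N : ℝ) * τ * max Lf Lf' := by
      apply mul_le_mul
      · apply mul_le_mul_of_nonneg_right _ hτ.le
        exact_mod_cast hj
      · exact le_max_right _ _
      · exact hLf'
      · positivity
    have h2 : Lu' ≤ max Lu Lu' := le_max_right _ _
    linarith
  have hHU := holder_prop d p h r τ hp hr hτ ω hnn hzero hfin a ha0 Lu Lf hLu hLf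
    u₀ f hu₀ hf U hU0 hUrec N L hLL hCFL'
  have hHU' := holder_prop d p h r τ hp hr hτ ω hnn hzero hfin a ha0 Lu' Lf' hLu' hLf'
    u₀' f' hu₀' hf' U' hU0' hUrec' N L hLL' hCFL'
  -- the sup norms
  obtain ⟨b1, hb1⟩ := hu₀b
  obtain ⟨b2, hb2⟩ := hu₀b'
  obtain ⟨b3, hb3⟩ := hfb
  obtain ⟨b4, hb4⟩ := hfb'
  have hb1' : ∀ x, |u₀ x| ≤ b1 := fun x => hb1 ⟨x, rfl⟩
  have hb2' : ∀ x, |u₀' x| ≤ b2 := fun x => hb2 ⟨x, rfl⟩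
  have hb3' : ∀ x, |f x| ≤ b3 := fun x => hb3 ⟨x, rfl⟩
  have hb4' : ∀ x, |f' x| ≤ b4 := fun x => hb4 ⟨x, rfl⟩
  have hbdu : BddAbove (Set.range fun x => |u₀ x - u₀' x|) := by
    refine ⟨b1 + b2, ?_⟩
    rintro y ⟨x, rfl⟩
    exact (abs_sub _ _).trans (add_le_add (hb1' x) (hb2' x))
  have hbdf : BddAbove (Set.range fun x => |f x - f' x|) := by
    refine ⟨b3 + b4, ?_⟩
    rintro y ⟨x, rfl⟩
    exact (abs_sub _ _).trans (add_le_add (hb3' x) (hb4' x))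
  set Cu : ℝ := ⨆ x, |u₀ x - u₀' x| with hCudef
  set Cf : ℝ := ⨆ x, |f x - f' x| with hCfdef
  have hCu : ∀ x, |u₀ x - u₀' x| ≤ Cu := fun x => le_ciSup hbdu x
  have hCf : ∀ x, |f x - f' x| ≤ Cf := fun x => le_ciSup hbdf x
  have hCf0 : 0 ≤ Cf := (abs_nonneg _).trans (hCf 0)
  -- main induction
  intro j
  induction j with
  | zero =>
    intro _ x
    simp only [hU0, hU0', Nat.cast_zero, zero_mul, add_zero]
    exact (le_of_eq rfl).trans (by simpa using hCu x)
  | succ j ih =>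
    intro hj x
    have hjN : j ≤ N := Nat.le_of_succ_le hj
    have IH := ih hjN
    have hincrU : ∀ (x₀ : EuclideanSpace ℝ (Fin d)) β, ω β ≠ 0 →
        |U j (x₀ + ygrid d h β) - U j x₀| ≤ L * r ^ a := by
      intro x₀ β hω
      have hnorm : ‖ygrid d h β‖ < r := by
        by_contra hc
        exact hω (hzero β (not_lt.mp hc))
      calc |U j (x₀ + ygrid d h β) - U j x₀| ≤
            (Lu + (j : ℝ) * τ * Lf) * ‖ygrid d h β‖ ^ a := hHU j hjN x₀ _
        _ ≤ L * r ^ a :=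
            mul_le_mul (hLL j hjN) (Real.rpow_le_rpow (norm_nonneg _) hnorm.le ha0.le)
              (Real.rpow_nonneg (norm_nonneg _) a) hLnn
    have hincrU' : ∀ (x₀ : EuclideanSpace ℝ (Fin d)) β, ω β ≠ 0 →
        |U' j (x₀ + ygrid d h β) - U' j x₀| ≤ L * r ^ a := by
      intro x₀ β hω
      have hnorm : ‖ygrid d h β‖ < r := by
        by_contra hc
        exact hω (hzero β (not_lt.mp hc))
      calc |U' j (x₀ + ygrid d h β) - U' j x₀| ≤
            (Lu' + (j : ℝ) * τ * Lf') * ‖ygrid d h β‖ ^ a := hHU' j hjN x₀ _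
        _ ≤ L * r ^ a :=
            mul_le_mul (hLL' j hjN) (Real.rpow_le_rpow (norm_nonneg _) hnorm.le ha0.le)
              (Real.rpow_nonneg (norm_nonneg _) a) hLnn
    have hstep := step_bound d p h hp ω hnn hfin τ (L * r ^ a)
      (Cu + (j : ℝ) * τ * Cf) hτ.le (by positivity)
      (U j) (U' j) f f' hincrU hincrU' hCFL' IH x
    rw [← hUrec j x, ← hUrec' j x] at hstep
    calc |U (j + 1) x - U' (j + 1) x| ≤ Cu + (j : ℝ) * τ * Cf + τ * |f x - f' x| := hstep
      _ ≤ Cu + (j : ℝ) * τ * Cf + τ * Cf :=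
          add_le_add_right (mul_le_mul_of_nonneg_left (hCf x) hτ.le) _
      _ = Cu + ((j : ℕ) + 1 : ℝ) * τ * Cf := by ring
      _ = Cu + ((j + 1 : ℕ) : ℝ) * τ * Cf := by norm_num
end

section
/- If ψ : ℝ^d → ℝ is bounded, then for every x ∈ ℝ^d, |D_p^h ψ(x)| ≤ ((p−1)/2) Σ_{β∈ℤ^d} max(|ψ(x+y_β) − ψ(x)|, |ψ(x) − ψ(x−y_β)|)^{p−2} · |ψ(x+y_β) + ψ(x−y_β) − 2ψ(x)| · ω_β. -/
open scoped BigOperators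

lemma aux_pow (q s t : ℝ) (hq : 0 ≤ q) (hs : 0 ≤ s) (hst : s ≤ t) :
    s * (t ^ q - s ^ q) ≤ q * t ^ q * (t - s) := by
  rcases eq_or_lt_of_le (hs.trans hst) with ht | ht
  · have : s = 0 := le_antisymm (ht ▸ hst) hs
    simp [this, ← ht]
  · set u := s / t with hu
    have hu0 : 0 ≤ u := div_nonneg hs ht.le
    have hu1 : u ≤ 1 := (div_le_one ht).2 hst
    have hsut : s = u * t := (div_mul_cancel₀ s ht.ne').symm
    have h1 : s ^ q = u ^ q * t ^ q := by
      rw [hsut, Real.mul_rpow hu0 ht.le]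
    have hber := one_add_mul_self_le_rpow_one_add (show (-1:ℝ) ≤ u - 1 by linarith)
      (show (1:ℝ) ≤ q + 1 by linarith)
    have h2 : (1 + (u - 1)) ^ (q + 1) = u ^ q * u := by
      rw [show 1 + (u - 1) = u by ring, Real.rpow_add' hu0 (by linarith), Real.rpow_one]
    rw [h2] at hber
    have key : u - u ^ q * u ≤ q * (1 - u) := by nlinarith
    have h3 : (0:ℝ) ≤ t * t ^ q := mul_nonneg ht.le (Real.rpow_nonneg ht.le q)
    rw [h1, hsut]
    nlinarith [mul_le_mul_of_nonneg_left key h3]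

lemma abs_Jp_sub_le (p : ℝ) (hp : 2 ≤ p) (a b : ℝ) :
    |Jp p a - Jp p b| ≤ (p - 1) * (max |a| |b|) ^ (p - 2) * |a - b| := by
  wlog hab : |b| ≤ |a| with H
  · have := H p hp b a (le_of_not_ge hab)
    simpa [max_comm, abs_sub_comm] using this
  set q := p - 2 with hqdef
  have hq : 0 ≤ q := by linarith
  rw [max_eq_left hab]
  have hmono : |b| ^ q ≤ |a| ^ q := Real.rpow_le_rpow (abs_nonneg b) hab hq
  have hkey := aux_pow q |b| |a| hq (abs_nonneg b) hab
  have h3 : |a| - |b| ≤ |a - b| := abs_sub_abs_le_abs_sub a b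
  have hM : (0:ℝ) ≤ |a| ^ q := Real.rpow_nonneg (abs_nonneg a) q
  have hsplit : Jp p a - Jp p b = |a| ^ q * (a - b) + (|a| ^ q - |b| ^ q) * b := by
    simp only [Jp, ← hqdef]; ring
  calc |Jp p a - Jp p b| ≤ |(|a| ^ q * (a - b))| + |((|a| ^ q - |b| ^ q) * b)| := by
        rw [hsplit]; exact abs_add_le _ _
    _ = |a| ^ q * |a - b| + (|a| ^ q - |b| ^ q) * |b| := by
        rw [abs_mul, abs_mul, abs_of_nonneg hM, abs_of_nonneg (sub_nonneg.2 hmono)]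
    _ ≤ |a| ^ q * |a - b| + q * |a| ^ q * (|a| - |b|) := by nlinarith
    _ ≤ |a| ^ q * |a - b| + q * |a| ^ q * |a - b| := by
        nlinarith [mul_le_mul_of_nonneg_left h3 (mul_nonneg hq hM)]
    _ = (p - 1) * |a| ^ q * |a - b| := by rw [hqdef]; ring

lemma ygrid_neg (d : ℕ) (h : ℝ) (β : Fin d → ℤ) : ygrid d h (-β) = -ygrid d h β := by
  ext i
  show ygrid d h (-β) i = -(ygrid d h β i)
  rw [ygrid_apply, ygrid_apply]
  simp only [Pi.neg_apply]
  push_cast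
  ring

lemma Jp_neg (p ξ : ℝ) : Jp p (-ξ) = -Jp p ξ := by
  unfold Jp; rw [abs_neg]; ring

lemma hcoord_le (d : ℕ) (h : ℝ) (hh : 0 < h) (β : Fin d → ℤ) (i : Fin d) :
    h * |(β i : ℝ)| ≤ ‖ygrid d h β‖ := by
  rw [EuclideanSpace.norm_eq]
  have h1 : h * |(β i : ℝ)| = Real.sqrt (‖ygrid d h β i‖ ^ 2) := by
    rw [Real.sqrt_sq_eq_abs, abs_norm, ygrid_apply, Real.norm_eq_abs, abs_mul,
      abs_of_pos hh]
  rw [h1]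
  apply Real.sqrt_le_sqrt
  exact Finset.single_le_sum (f := fun j => ‖ygrid d h β j‖ ^ 2)
    (fun j _ => sq_nonneg _) (Finset.mem_univ i)

/-- Second-order difference bound for the discrete `p`-Laplacian (estimate (3.4)). -/
theorem abs_Dph_le_second_differences (d : ℕ) (hd : 1 ≤ d) (p : ℝ) (hp : 2 ≤ p)
    (h r : ℝ) (hh : 0 < h) (hr : 0 < r)
    (ω : (Fin d → ℤ) → ℝ) (hsym : ∀ β, ω (-β) = ω β) (hnn : ∀ β, 0 ≤ ω β)
    (hzero : ∀ β, r ≤ ‖ygrid d h β‖ → ω β = 0)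
    (ψ : EuclideanSpace ℝ (Fin d) → ℝ) (hψ : BddAbove (Set.range fun z => |ψ z|))
    (x : EuclideanSpace ℝ (Fin d)) :
    |Dph d p h ω ψ x| ≤
      (p - 1) / 2 *
        ∑ᶠ β, (max |ψ (x + ygrid d h β) - ψ x| |ψ x - ψ (x - ygrid d h β)|) ^ (p - 2) *
          |ψ (x + ygrid d h β) + ψ (x - ygrid d h β) - 2 * ψ x| * ω β := by
  -- finiteness of the support of ω
  set N := ⌈r / h⌉ with hN
  have hsetfin : ({n : ℤ | |(n : ℝ)| ≤ r / h}).Finite := by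
    apply Set.Finite.subset (Set.finite_Icc (-N) N)
    intro n hn
    simp only [Set.mem_setOf_eq] at hn
    have h1 : (n : ℝ) ≤ r / h := (abs_le.1 hn).2
    have h2 : -(r / h) ≤ (n : ℝ) := (abs_le.1 hn).1
    have hceil : (r / h : ℝ) ≤ (N : ℝ) := Int.le_ceil _
    refine Set.mem_Icc.2 ⟨?_, ?_⟩
    · exact_mod_cast (show -(N : ℝ) ≤ (n : ℝ) by linarith)
    · exact_mod_cast (show (n : ℝ) ≤ (N : ℝ) by linarith)
  have hfin : (Function.support ω).Finite := by
    apply Set.Finite.subset (Set.Finite.pi (fun _ : Fin d => hsetfin))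
    intro β hβ
    have hlt : ‖ygrid d h β‖ < r := lt_of_not_ge fun hge => hβ (hzero β hge)
    intro i _
    have hc := hcoord_le d h hh β i
    have h1 : |(β i : ℝ)| * h < r := by rw [mul_comm]; exact lt_of_le_of_lt hc hlt
    exact le_of_lt ((lt_div_iff₀ hh).2 h1)
  set T := hfin.toFinset with hT
  have hsub : ∀ (F : (Fin d → ℤ) → ℝ), Function.support (fun β => F β * ω β) ⊆ ↑T := by
    intro F β hβ
    rw [hT, Set.Finite.coe_toFinset]
    intro h0
    exact hβ (by simp [h0])
  set a : (Fin d → ℤ) → ℝ := fun β => ψ (x + ygrid d h β) - ψ x with ha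
  set b : (Fin d → ℤ) → ℝ := fun β => ψ x - ψ (x - ygrid d h β) with hb
  have hDa : Dph d p h ω ψ x = ∑ β ∈ T, Jp p (a β) * ω β :=
    finsum_eq_sum_of_support_subset _ (hsub _)
  have hR : (∑ᶠ β, (max |ψ (x + ygrid d h β) - ψ x| |ψ x - ψ (x - ygrid d h β)|) ^ (p - 2) *
          |ψ (x + ygrid d h β) + ψ (x - ygrid d h β) - 2 * ψ x| * ω β)
      = ∑ β ∈ T, (max |a β| |b β|) ^ (p - 2) *
          |ψ (x + ygrid d h β) + ψ (x - ygrid d h β) - 2 * ψ x| * ω β :=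
    finsum_eq_sum_of_support_subset _ (hsub _)
  have hTmem : ∀ β : Fin d → ℤ, β ∈ T ↔ -β ∈ T := by
    intro β
    rw [hT, Set.Finite.mem_toFinset, Set.Finite.mem_toFinset,
      Function.mem_support, Function.mem_support, hsym]
  have hDb : ∑ β ∈ T, Jp p (a β) * ω β = ∑ β ∈ T, -Jp p (b β) * ω β := by
    apply Finset.sum_equiv (Equiv.neg (Fin d → ℤ))
    · intro β; simpa using hTmem β
    · intro β _
      simp only [Equiv.neg_apply]
      rw [hsym]
      congr 1
      rw [ha, hb]
      simp only
      rw [ygrid_neg, sub_neg_eq_add,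
        show ψ x - ψ (x + ygrid d h β) = -(ψ (x + ygrid d h β) - ψ x) by ring, Jp_neg,
        neg_neg]
  have h2D : 2 * Dph d p h ω ψ x = ∑ β ∈ T, (Jp p (a β) - Jp p (b β)) * ω β := by
    calc 2 * Dph d p h ω ψ x
        = (∑ β ∈ T, Jp p (a β) * ω β) + ∑ β ∈ T, Jp p (a β) * ω β := by rw [hDa]; ring
      _ = (∑ β ∈ T, Jp p (a β) * ω β) + ∑ β ∈ T, -Jp p (b β) * ω β := by rw [← hDb]
      _ = ∑ β ∈ T, (Jp p (a β) - Jp p (b β)) * ω β := by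
          rw [← Finset.sum_add_distrib]
          exact Finset.sum_congr rfl fun β _ => by ring
  have hhalf : Dph d p h ω ψ x = (1/2) * ∑ β ∈ T, (Jp p (a β) - Jp p (b β)) * ω β := by
    linarith
  rw [hhalf, hR, abs_mul, abs_of_pos (by norm_num : (0:ℝ) < 1/2)]
  have hbound : |∑ β ∈ T, (Jp p (a β) - Jp p (b β)) * ω β|
      ≤ ∑ β ∈ T, (p - 1) * ((max |a β| |b β|) ^ (p - 2) *
          |ψ (x + ygrid d h β) + ψ (x - ygrid d h β) - 2 * ψ x| * ω β) := by
    refine (Finset.abs_sum_le_sum_abs _ _).trans (Finset.sum_le_sum fun β _ => ?_)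
    rw [abs_mul, abs_of_nonneg (hnn β)]
    have hJ := abs_Jp_sub_le p hp (a β) (b β)
    have hab : a β - b β = ψ (x + ygrid d h β) + ψ (x - ygrid d h β) - 2 * ψ x := by
      rw [ha, hb]; ring
    rw [hab] at hJ
    have := mul_le_mul_of_nonneg_right hJ (hnn β)
    calc |Jp p (a β) - Jp p (b β)| * ω β
        ≤ (p - 1) * (max |a β| |b β|) ^ (p - 2) *
          |ψ (x + ygrid d h β) + ψ (x - ygrid d h β) - 2 * ψ x| * ω β := this
      _ = (p - 1) * ((max |a β| |b β|) ^ (p - 2) *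
          |ψ (x + ygrid d h β) + ψ (x - ygrid d h β) - 2 * ψ x| * ω β) := by ring
  calc (1/2) * |∑ β ∈ T, (Jp p (a β) - Jp p (b β)) * ω β|
      ≤ (1/2) * ∑ β ∈ T, (p - 1) * ((max |a β| |b β|) ^ (p - 2) *
          |ψ (x + ygrid d h β) + ψ (x - ygrid d h β) - 2 * ψ x| * ω β) := by
        exact mul_le_mul_of_nonneg_left hbound (by norm_num)
    _ = (p - 1) / 2 * ∑ β ∈ T, (max |a β| |b β|) ^ (p - 2) *
          |ψ (x + ygrid d h β) + ψ (x - ygrid d h β) - 2 * ψ x| * ω β := by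
        rw [Finset.mul_sum, Finset.mul_sum]
        exact Finset.sum_congr rfl fun β _ => by ring
end
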